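/- Under the CA-OCSC recursion with the doubly-adaptive adjustment policy, for every horizon T ≥ 1, every erasure sequence {E_t} ⊆ {0,1}, every sequence of source symbols, every sequence of predictive distributions, every D ∈ (0,1] and ε ∈ (0, D), the reconstructed sequence satisfies (1/T) ∑_{t=1}^T 𝟙{X̂_t ≠ X_t} ≤ D + K/(η T) + Q_T/T, where K = η(1 − ε) + λ_0 and Q_T is the residual distortion queue at time T. (Proposition 1, CA-OCSC case) -/
import Mathlib


open scoped Classical

/-- **Proposition 1, CA-OCSC case (distortion vs. residual queue).**
Under the CA-OCSC recursion with the doubly-adaptive adjustment policy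
(`δ^tgt_1 = 0`, `δ^tgt_{t+1} = min{D − ε, Q_t}`, residual queue
`Q_t = ∑_{i=1}^t (E_i − δ^tgt_i)`, update
`lam (t+1) = lam t − η ((1 − E_t) 𝟙{X_t ∉ 𝒳_t} − D + δ^tgt_t)`, and reconstruction
`X̂_t = X_t` whenever `E_t = 0` and `X_t ∈ 𝒳_t`), for every horizon `T ≥ 1`, every
erasure sequence `{E_t} ⊆ {0,1}`, every source sequence, every sequence of
predictive distributions, every `D ∈ (0,1]` and `ε ∈ (0, D)`:
`(1/T) ∑_{t=1}^T 𝟙{X̂_t ≠ X_t} ≤ D + K/(η T) + Q_T/T` with `K = η (1 − ε) + λ₀`. -/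
theorem ca_ocsc_distortion_queue_bound
    {𝒳 : Type*} [Fintype 𝒳] [Nonempty 𝒳]
    (X Xhat : ℕ → 𝒳) (p : ℕ → 𝒳 → ℝ)
    (hp0 : ∀ t x, 0 ≤ p t x) (hp1 : ∀ t, ∑ x, p t x = 1)
    (E : ℕ → ℝ) (hE : ∀ t, E t = 0 ∨ E t = 1)
    (D ε : ℝ) (hD : 0 < D ∧ D ≤ 1) (hε : 0 < ε ∧ ε < D)
    (η : ℝ) (hη : 0 < η)
    (lam₀ : ℝ) (hlam₀ : 0 < lam₀)
    (lam s δtgt Q : ℕ → ℝ) (hinit : lam 1 = lam₀)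
    (hs : ∀ t, s t = max 0 (lam t))
    (hupd : ∀ t, 1 ≤ t →
      lam (t + 1) = lam t
        - η * ((1 - E t) * (if p t (X t) < s t then (1 : ℝ) else 0) - D + δtgt t))
    (hQ0 : Q 0 = 0)
    (hQ : ∀ t, Q t = ∑ i ∈ Finset.Icc 1 t, (E i - δtgt i))
    (hδ1 : δtgt 1 = 0)
    (hδ : ∀ t, 1 ≤ t → δtgt (t + 1) = min (D - ε) (Q t))
    (hrec : ∀ t, 1 ≤ t → E t = 0 → s t ≤ p t (X t) → Xhat t = X t)
    (T : ℕ) (hT : 1 ≤ T) :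
    (1 / (T : ℝ)) * ∑ t ∈ Finset.Icc 1 T, (if Xhat t ≠ X t then (1 : ℝ) else 0)
      ≤ D + (η * (1 - ε) + lam₀) / (η * T) + Q T / T := by
  have hTpos : (0:ℝ) < T := by exact_mod_cast Nat.lt_of_lt_of_le Nat.zero_lt_one hT
  have hε1 : ε < 1 := lt_of_lt_of_le hε.2 hD.2
  -- δtgt bound
  have hδle : ∀ t, 1 ≤ t → δtgt t ≤ D - ε := by
    intro t ht
    match t, ht with
    | 1, _ => rw [hδ1]; linarith [hε.1, hε.2]
    | (k+2), _ => rw [hδ (k+1) (by omega)]; exact min_le_left _ _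
  -- lower bound on lam
  have hlb : ∀ t, 1 ≤ t → -(η*(1-ε)) ≤ lam t := by
    intro t ht
    induction t, ht using Nat.le_induction with
    | base => rw [hinit]; nlinarith
    | succ n hn ih =>
      rw [hupd n hn]
      by_cases hcase : lam n ≤ 0
      · have hs0 : s n = 0 := by rw [hs]; exact max_eq_left hcase
        have hni : ¬ p n (X n) < s n := by rw [hs0]; exact not_lt.mpr (hp0 n (X n))
        rw [if_neg hni]
        have := hδle n hn
        nlinarith
      · push_neg at hcase
        have hLn : (1 - E n) * (if p n (X n) < s n then (1:ℝ) else 0) ≤ 1 := by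
          rcases hE n with h|h <;> rw [h] <;> split <;> norm_num
        have := hδle n hn
        nlinarith
  -- telescoping
  have htel : ∀ t, 1 ≤ t → lam (t+1) = lam 1 - η * ∑ i ∈ Finset.Icc 1 t,
      ((1 - E i) * (if p i (X i) < s i then (1:ℝ) else 0) - D + δtgt i) := by
    intro t ht
    induction t, ht using Nat.le_induction with
    | base => rw [hupd 1 le_rfl]; simp
    | succ n hn ih =>
      rw [hupd (n+1) (by omega), ih, Finset.sum_Icc_succ_top (by omega : 1 ≤ n+1)]
      ring
  -- pointwise indicator bound
  have hind : ∀ t, 1 ≤ t → (if Xhat t ≠ X t then (1:ℝ) else 0) ≤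
      (1 - E t) * (if p t (X t) < s t then (1:ℝ) else 0) + E t := by
    intro t ht
    rcases hE t with h|h
    · by_cases hpc : p t (X t) < s t
      · rw [h, if_pos hpc]; split <;> norm_num
      · push_neg at hpc
        have hx := hrec t ht h hpc
        rw [if_neg (not_lt.mpr hpc), h, if_neg (by simp [hx])]
        norm_num
    · rw [h]; split <;> split <;> norm_num
  -- sum bound
  have hsum : ∑ t ∈ Finset.Icc 1 T, (if Xhat t ≠ X t then (1:ℝ) else 0)
      ≤ ∑ t ∈ Finset.Icc 1 T,
        ((1 - E t) * (if p t (X t) < s t then (1:ℝ) else 0) + E t) := by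
    apply Finset.sum_le_sum
    intro i hi
    exact hind i (Finset.mem_Icc.mp hi).1
  -- algebraic identity
  have e1 : ∑ t ∈ Finset.Icc 1 T,
        ((1 - E t) * (if p t (X t) < s t then (1:ℝ) else 0) + E t)
      = (∑ t ∈ Finset.Icc 1 T,
          ((1 - E t) * (if p t (X t) < s t then (1:ℝ) else 0) - D + δtgt t))
        + T * D + Q T := by
    rw [hQ T]
    rw [Finset.sum_add_distrib, Finset.sum_add_distrib, Finset.sum_sub_distrib,
      Finset.sum_sub_distrib, Finset.sum_const, Nat.card_Icc, nsmul_eq_mul]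
    push_cast [Nat.add_sub_cancel]
    ring
  have htel' := htel T hT
  have hlbT := hlb (T+1) (by omega)
  have hSb : η * ∑ t ∈ Finset.Icc 1 T,
      ((1 - E t) * (if p t (X t) < s t then (1:ℝ) else 0) - D + δtgt t)
      ≤ lam₀ + η * (1-ε) := by
    have : η * ∑ t ∈ Finset.Icc 1 T,
        ((1 - E t) * (if p t (X t) < s t then (1:ℝ) else 0) - D + δtgt t)
        = lam 1 - lam (T+1) := by rw [htel']; ring
    rw [this, hinit]; linarith
  have hfin : ∑ t ∈ Finset.Icc 1 T, (if Xhat t ≠ X t then (1:ℝ) else 0)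
      ≤ (η * (1-ε) + lam₀) / η + T * D + Q T := by
    have h2 : ∑ t ∈ Finset.Icc 1 T,
        ((1 - E t) * (if p t (X t) < s t then (1:ℝ) else 0) - D + δtgt t)
        ≤ (η * (1-ε) + lam₀) / η := by
      rw [le_div_iff₀ hη]; nlinarith
    calc _ ≤ _ := hsum
    _ = _ := e1
    _ ≤ (η * (1-ε) + lam₀) / η + T * D + Q T := by linarith
  have hRHS : D + (η * (1 - ε) + lam₀) / (η * T) + Q T / T
      = ((η * (1-ε) + lam₀) / η + T * D + Q T) / T := by
    field_simp
    ring
  rw [hRHS, one_div, inv_mul_eq_div, div_le_div_iff₀ hTpos hTpos]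
  nlinarith [hfin, hTpos]
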